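/- Let (Ω, 𝔉, μ) be a probability space, γ > 0, and δ ∈ (0,1). For each t ≥ 1 let R_t : Ω → ℝ and C_t : Ω → ℝ be measurable, and define e_t(ω) = 1 if R_t(ω) > C_t(ω) and e_t(ω) = 0 otherwise. Let δ'_t : Ω → ℝ satisfy, for every ω, δ'_{t+1}(ω) = δ'_t(ω) + γ·(δ − e_t(ω)) for all t ≥ 1, with δ'_1(ω) = δ, and suppose that for every t ≥ 1 and every ω, δ'_t(ω) < 0 implies e_t(ω) = 0 and δ'_t(ω) > 1 implies e_t(ω) = 1. Then the sequence T ↦ (1/T)·∑_{t=1}^{T} μ{ω : R_t(ω) ≤ C_t(ω)} converges to 1 − δ as T → ∞. -/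

import Mathlib

open MeasureTheory Filter

/-- Asymptotic form of Lemma 1: the time-averaged coverage probability of the
adaptive conformal prediction regions converges to the target `1 − δ`. -/
theorem acp_average_coverage_limit
    {Ω : Type*} [MeasurableSpace Ω] (μ : Measure Ω) [IsProbabilityMeasure μ]
    (γ δ : ℝ) (hγ : 0 < γ) (hδ : δ ∈ Set.Ioo (0 : ℝ) 1)
    (R C : ℕ → Ω → ℝ)
    (hR : ∀ t, Measurable (R t)) (hC : ∀ t, Measurable (C t))
    (e : ℕ → Ω → ℝ)
    (he : ∀ t ω, e t ω = if R t ω > C t ω then 1 else 0)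
    (δ' : ℕ → Ω → ℝ)
    (hrec : ∀ t, 1 ≤ t → ∀ ω, δ' (t + 1) ω = δ' t ω + γ * (δ - e t ω))
    (hinit : ∀ ω, δ' 1 ω = δ)
    (hlow : ∀ t, 1 ≤ t → ∀ ω, δ' t ω < 0 → e t ω = 0)
    (hhigh : ∀ t, 1 ≤ t → ∀ ω, δ' t ω > 1 → e t ω = 1) :
    Tendsto
      (fun T : ℕ => (1 / (T : ℝ)) * ∑ t ∈ Finset.Icc 1 T, (μ {ω | R t ω ≤ C t ω}).toReal)
      atTop (nhds (1 - δ)) := by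
  obtain ⟨hδ0, hδ1⟩ := hδ
  have he01 : ∀ t ω, e t ω = 0 ∨ e t ω = 1 := by
    intro t ω; rw [he]; split
    · right; rfl
    · left; rfl
  -- bound on δ'
  have hbd : ∀ t, 1 ≤ t → ∀ ω, -γ ≤ δ' t ω ∧ δ' t ω ≤ 1 + γ := by
    intro t
    induction t with
    | zero => omega
    | succ n ih =>
      intro _ ω
      rcases Nat.eq_zero_or_pos n with h | h
      · subst h
        rw [hinit]
        constructor <;> nlinarith
      · have hn : 1 ≤ n := h
        obtain ⟨ih1, ih2⟩ := ih hn ω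
        rw [hrec n hn ω]
        rcases lt_or_ge (δ' n ω) 0 with h0 | h0
        · rw [hlow n hn ω h0]
          constructor <;> nlinarith
        · rcases lt_or_ge 1 (δ' n ω) with h1 | h1
          · rw [hhigh n hn ω h1]
            constructor <;> nlinarith
          · rcases he01 n ω with hE | hE <;> rw [hE] <;>
              constructor <;> nlinarith
  -- telescoping
  have hsum : ∀ T : ℕ, ∀ ω, δ' (T + 1) ω = δ + γ * ∑ t ∈ Finset.Icc 1 T, (δ - e t ω) := by
    intro T ω
    induction T with
    | zero => simp [hinit]
    | succ n ih =>
      rw [hrec (n + 1) (by omega) ω, ih, Finset.sum_Icc_succ_top (by omega)]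
      ring
  set M : ℝ := (1 + γ) / γ with hM
  have hMpos : 0 < M := by positivity
  have hSbd : ∀ T : ℕ, ∀ ω,
      |(∑ t ∈ Finset.Icc 1 T, e t ω) - (T : ℝ) * δ| ≤ M := by
    intro T ω
    have h1 := hsum T ω
    have h2 := hbd (T + 1) (by omega) ω
    have hsplit : ∑ t ∈ Finset.Icc 1 T, (δ - e t ω)
        = (T : ℝ) * δ - ∑ t ∈ Finset.Icc 1 T, e t ω := by
      rw [Finset.sum_sub_distrib, Finset.sum_const, Nat.card_Icc]
      simp
    rw [hsplit] at h1
    rw [abs_le, hM]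
    have hg : γ * ((1 + γ) / γ) = 1 + γ := by field_simp
    constructor
    · nlinarith [h2.2, h2.1, hg, hγ, hδ0, hδ1]
    · nlinarith [h2.2, h2.1, hg, hγ, hδ0, hδ1]
  -- measure quantities
  set A : ℕ → Set Ω := fun t => {ω | C t ω < R t ω} with hA
  have hAm : ∀ t, MeasurableSet (A t) := fun t => measurableSet_lt (hC t) (hR t)
  set q : ℕ → ℝ := fun t => (μ (A t)).toReal with hq
  have heind : ∀ t, e t = (A t).indicator (fun _ => (1 : ℝ)) := by
    intro t
    funext ω
    by_cases h : ω ∈ A t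
    · rw [Set.indicator_of_mem h, he]
      exact if_pos h
    · rw [Set.indicator_of_notMem h, he]
      exact if_neg h
  have heint : ∀ t, Integrable (e t) μ := by
    intro t
    rw [heind t]
    exact (integrable_const (1 : ℝ)).indicator (hAm t)
  have heval : ∀ t, ∫ ω, e t ω ∂μ = q t := by
    intro t
    rw [show (fun ω => e t ω) = e t from rfl, heind t]
    rw [integral_indicator_const (1 : ℝ) (hAm t)]
    simp [hq]
    rfl
  have hmeas : ∀ t, (μ {ω | R t ω ≤ C t ω}).toReal = 1 - q t := by
    intro t
    have hcompl : {ω | R t ω ≤ C t ω} = (A t)ᶜ := by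
      ext ω; simp [hA, not_lt]
    rw [hcompl, measure_compl (hAm t) (measure_ne_top μ _), measure_univ,
      ENNReal.toReal_sub_of_le prob_le_one (by simp)]
    simp [hq]
  -- bound on sum of q
  have hqbd : ∀ T : ℕ, |(∑ t ∈ Finset.Icc 1 T, q t) - (T : ℝ) * δ| ≤ M := by
    intro T
    have hS : ∑ t ∈ Finset.Icc 1 T, q t = ∫ ω, ∑ t ∈ Finset.Icc 1 T, e t ω ∂μ := by
      rw [integral_finset_sum _ (fun t _ => heint t)]
      exact (Finset.sum_congr rfl (fun t _ => (heval t).symm))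
    have hint : Integrable (fun ω => ∑ t ∈ Finset.Icc 1 T, e t ω) μ :=
      integrable_finset_sum _ (fun t _ => heint t)
    have hconst1 : (T : ℝ) * δ - M = ∫ _ω, ((T : ℝ) * δ - M) ∂μ := by
      rw [integral_const]; simp
    have hconst2 : (T : ℝ) * δ + M = ∫ _ω, ((T : ℝ) * δ + M) ∂μ := by
      rw [integral_const]; simp
    have hle1 : (T : ℝ) * δ - M ≤ ∫ ω, ∑ t ∈ Finset.Icc 1 T, e t ω ∂μ := by
      rw [hconst1]
      apply integral_mono (integrable_const _) hint
      intro ω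
      have h := hSbd T ω
      rw [abs_le] at h
      show (T : ℝ) * δ - M ≤ ∑ t ∈ Finset.Icc 1 T, e t ω
      linarith [h.1]
    have hle2 : (∫ ω, ∑ t ∈ Finset.Icc 1 T, e t ω ∂μ) ≤ (T : ℝ) * δ + M := by
      rw [hconst2]
      apply integral_mono hint (integrable_const _)
      intro ω
      have h := hSbd T ω
      rw [abs_le] at h
      show ∑ t ∈ Finset.Icc 1 T, e t ω ≤ (T : ℝ) * δ + M
      linarith [h.2]
    rw [hS, abs_le]
    exact ⟨by linarith, by linarith⟩
  -- limit of averaged q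
  have hqlim : Tendsto (fun T : ℕ => (1 / (T : ℝ)) * ∑ t ∈ Finset.Icc 1 T, q t)
      atTop (nhds δ) := by
    have hlo : Tendsto (fun T : ℕ => δ - M / (T : ℝ)) atTop (nhds δ) := by
      have := tendsto_const_div_atTop_nhds_zero_nat M
      simpa using (tendsto_const_nhds (x := δ)).sub this
    have hhi : Tendsto (fun T : ℕ => δ + M / (T : ℝ)) atTop (nhds δ) := by
      have := tendsto_const_div_atTop_nhds_zero_nat M
      simpa using (tendsto_const_nhds (x := δ)).add this
    apply tendsto_of_tendsto_of_tendsto_of_le_of_le' hlo hhi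
    · filter_upwards [eventually_ge_atTop 1] with T hT
      have hT0 : (0 : ℝ) < T := by exact_mod_cast hT
      have h := hqbd T
      rw [abs_le] at h
      have key : (1 / (T : ℝ)) * (∑ t ∈ Finset.Icc 1 T, q t) - δ
          = ((∑ t ∈ Finset.Icc 1 T, q t) - (T : ℝ) * δ) / T := by
        field_simp
      have h2 : -(M / (T : ℝ)) ≤ (1 / (T : ℝ)) * (∑ t ∈ Finset.Icc 1 T, q t) - δ := by
        rw [key, ← neg_div]
        exact (div_le_div_iff_of_pos_right hT0).mpr h.1
      linarith
    · filter_upwards [eventually_ge_atTop 1] with T hT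
      have hT0 : (0 : ℝ) < T := by exact_mod_cast hT
      have h := hqbd T
      rw [abs_le] at h
      have key : (1 / (T : ℝ)) * (∑ t ∈ Finset.Icc 1 T, q t) - δ
          = ((∑ t ∈ Finset.Icc 1 T, q t) - (T : ℝ) * δ) / T := by
        field_simp
      have h2 : (1 / (T : ℝ)) * (∑ t ∈ Finset.Icc 1 T, q t) - δ ≤ M / (T : ℝ) := by
        rw [key]
        exact (div_le_div_iff_of_pos_right hT0).mpr h.2
      linarith
  -- conclude
  have hfinal : Tendsto (fun T : ℕ => 1 - (1 / (T : ℝ)) * ∑ t ∈ Finset.Icc 1 T, q t)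
      atTop (nhds (1 - δ)) := tendsto_const_nhds.sub hqlim
  apply hfinal.congr'
  filter_upwards [eventually_ge_atTop 1] with T hT
  have hT0 : ((T : ℝ)) ≠ 0 := by
    have : (0 : ℝ) < T := by exact_mod_cast hT
    exact ne_of_gt this
  have hsum2 : ∑ t ∈ Finset.Icc 1 T, (μ {ω | R t ω ≤ C t ω}).toReal
      = (T : ℝ) - ∑ t ∈ Finset.Icc 1 T, q t := by
    rw [Finset.sum_congr rfl (fun t _ => hmeas t), Finset.sum_sub_distrib,
      Finset.sum_const, Nat.card_Icc]
    simp
  rw [hsum2]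
  field_simp
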